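/- Fix real numbers h, η, ρ with η > 0 and 0 ≤ ρ < 1. The function F(P₁, P₂) = (1/2)·log(2πe·(1 - ρ² + h²P₂ + P₁(ρ - η)²/(P₁ + η²))) is concave on the quadrant {(P₁, P₂) : P₁ ≥ 0, P₂ ≥ 0}, and is nondecreasing in P₁ for each fixed P₂ ≥ 0 and nondecreasing in P₂ for each fixed P₁ ≥ 0. -/

import Mathlib

private lemma phi_mono {c e x y : ℝ} (hc : 0 ≤ c) (he : 0 < e) (hx : 0 ≤ x) (hxy : x ≤ y) :
    x * c / (x + e) ≤ y * c / (y + e) := by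
  rw [div_le_div_iff₀ (by linarith) (by linarith)]
  nlinarith [mul_nonneg (mul_nonneg hc he.le) (sub_nonneg.2 hxy)]

private lemma phi_concave {c e x y a b : ℝ} (hc : 0 ≤ c) (he : 0 < e) (hx : 0 ≤ x) (hy : 0 ≤ y)
    (ha : 0 ≤ a) (hb : 0 ≤ b) (hab : a + b = 1) :
    a * (x * c / (x + e)) + b * (y * c / (y + e)) ≤
      (a * x + b * y) * c / ((a * x + b * y) + e) := by
  have hb' : b = 1 - a := by linarith
  subst hb'
  have hxe : 0 < x + e := by linarith
  have hye : 0 < y + e := by linarith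
  have hze : 0 < (a * x + (1 - a) * y) + e := by nlinarith
  have key : (a * x + (1 - a) * y) * c / ((a * x + (1 - a) * y) + e) -
      (a * (x * c / (x + e)) + (1 - a) * (y * c / (y + e))) =
      c * a * (1 - a) * e * (x - y) ^ 2 / ((x + e) * (y + e) * ((a * x + (1 - a) * y) + e)) := by
    field_simp
    ring
  have hnn : 0 ≤ c * a * (1 - a) * e * (x - y) ^ 2 /
      ((x + e) * (y + e) * ((a * x + (1 - a) * y) + e)) := by
    apply div_nonneg
    · have := sq_nonneg (x - y)
      positivity
    · positivity
  linarith

private lemma half_log_comb {C u v w a b : ℝ} (hC : 0 < C) (hu : 0 < u) (hv : 0 < v)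
    (ha : 0 ≤ a) (hb : 0 ≤ b) (hab : a + b = 1) (hcomb : a * u + b * v ≤ w) :
    a * (1 / 2 * Real.log (C * u)) + b * (1 / 2 * Real.log (C * v)) ≤
      1 / 2 * Real.log (C * w) := by
  have h0 : 0 < a * u + b * v := by
    rcases ha.lt_or_eq with hlt | heq
    · nlinarith [mul_pos hlt hu, mul_nonneg hb hv.le]
    · have hb1 : b = 1 := by linarith
      rw [← heq, hb1]; simpa using hv
  have hw : 0 < w := lt_of_lt_of_le h0 hcomb
  have h1 : a * Real.log (C * u) + b * Real.log (C * v) ≤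
      Real.log (a * (C * u) + b * (C * v)) := by
    have := (strictConcaveOn_log_Ioi.concaveOn).2 (Set.mem_Ioi.mpr (by positivity : 0 < C * u))
      (Set.mem_Ioi.mpr (by positivity : 0 < C * v)) ha hb hab
    simpa [smul_eq_mul] using this
  have h2 : a * (C * u) + b * (C * v) ≤ C * w := by nlinarith
  have h3 := Real.log_le_log (by nlinarith [mul_pos hC h0]) h2
  linarith

theorem cond_entropy_concave_monotone (h η ρ : ℝ) (hη : 0 < η) (hρ : 0 ≤ ρ) (hρ1 : ρ < 1) :
    ConcaveOn ℝ {p : ℝ × ℝ | 0 ≤ p.1 ∧ 0 ≤ p.2}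
      (fun p : ℝ × ℝ => (1 / 2) * Real.log (2 * Real.pi * Real.exp 1 *
        (1 - ρ ^ 2 + h ^ 2 * p.2 + p.1 * (ρ - η) ^ 2 / (p.1 + η ^ 2)))) ∧
    (∀ P₂ : ℝ, 0 ≤ P₂ → MonotoneOn
      (fun P₁ : ℝ => (1 / 2) * Real.log (2 * Real.pi * Real.exp 1 *
        (1 - ρ ^ 2 + h ^ 2 * P₂ + P₁ * (ρ - η) ^ 2 / (P₁ + η ^ 2)))) (Set.Ici 0)) ∧
    (∀ P₁ : ℝ, 0 ≤ P₁ → MonotoneOn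
      (fun P₂ : ℝ => (1 / 2) * Real.log (2 * Real.pi * Real.exp 1 *
        (1 - ρ ^ 2 + h ^ 2 * P₂ + P₁ * (ρ - η) ^ 2 / (P₁ + η ^ 2)))) (Set.Ici 0)) := by
  have hC : 0 < 2 * Real.pi * Real.exp 1 := by positivity
  have he : (0:ℝ) < η ^ 2 := by positivity
  have hc : (0:ℝ) ≤ (ρ - η) ^ 2 := sq_nonneg _
  have h1ρ : (0:ℝ) < 1 - ρ ^ 2 := by nlinarith
  have hpos : ∀ x y : ℝ, 0 ≤ x → 0 ≤ y →
      0 < 1 - ρ ^ 2 + h ^ 2 * y + x * (ρ - η) ^ 2 / (x + η ^ 2) := by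
    intro x y hx hy
    have h1 : 0 ≤ x * (ρ - η) ^ 2 / (x + η ^ 2) := by positivity
    nlinarith [mul_nonneg (sq_nonneg h) hy]
  refine ⟨?_, ?_, ?_⟩
  · constructor
    · exact (convex_Ici (0:ℝ)).prod (convex_Ici 0)
    · rintro ⟨x1, x2⟩ ⟨hx1, hx2⟩ ⟨y1, y2⟩ ⟨hy1, hy2⟩ a b ha hb hab
      simp only [Prod.smul_mk, Prod.mk_add_mk, smul_eq_mul]
      simp only [Set.mem_setOf_eq] at hx1 hx2 hy1 hy2
      refine half_log_comb hC (hpos x1 x2 hx1 hx2) (hpos y1 y2 hy1 hy2) ha hb hab ?_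
      have hphi := phi_concave (c := (ρ - η) ^ 2) (e := η ^ 2) (x := x1) (y := y1)
        hc he hx1 hy1 ha hb hab
      nlinarith [hphi]
  · intro P₂ hP₂ x hx y hy hxy
    simp only [Set.mem_Ici] at hx hy
    have hphi := phi_mono (c := (ρ - η) ^ 2) (e := η ^ 2) hc he hx hxy
    have hp := hpos x P₂ hx hP₂
    have harg : 2 * Real.pi * Real.exp 1 *
        (1 - ρ ^ 2 + h ^ 2 * P₂ + x * (ρ - η) ^ 2 / (x + η ^ 2)) ≤
        2 * Real.pi * Real.exp 1 *
        (1 - ρ ^ 2 + h ^ 2 * P₂ + y * (ρ - η) ^ 2 / (y + η ^ 2)) :=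
      mul_le_mul_of_nonneg_left (by linarith) hC.le
    have hlog := Real.log_le_log (by positivity) harg
    simpa using by linarith
  · intro P₁ hP₁ x hx y hy hxy
    simp only [Set.mem_Ici] at hx hy
    have hp := hpos P₁ x hP₁ hx
    have hmul : h ^ 2 * x ≤ h ^ 2 * y := mul_le_mul_of_nonneg_left hxy (sq_nonneg h)
    have harg : 2 * Real.pi * Real.exp 1 *
        (1 - ρ ^ 2 + h ^ 2 * x + P₁ * (ρ - η) ^ 2 / (P₁ + η ^ 2)) ≤
        2 * Real.pi * Real.exp 1 *
        (1 - ρ ^ 2 + h ^ 2 * y + P₁ * (ρ - η) ^ 2 / (P₁ + η ^ 2)) :=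
      mul_le_mul_of_nonneg_left (by linarith) hC.le
    have hlog := Real.log_le_log (by positivity) harg
    simpa using by linarith
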